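/- Let b be an integer with b ≥ 5^{1/(1-θ)}, 0 < θ < 1, a = b^{-θ}, f = E_b, and v(x) = cos(2πx). Then the unique bounded solution α of the θ-twisted cohomological equation (which equals the classical Weierstrass function up to normalization) satisfies: for Lebesgue-almost every x ∈ ℝ/ℤ, the local Hölder exponent of α at x is exactly θ, i.e., α is θ-Hölder at x but not (θ+γ)-Hölder at x for any γ > 0. -/

import Mathlib

open Real MeasureTheory

open Filter Set
open scoped ENNReal


noncomputable def Wf (b : ℕ) (θ : ℝ) : ℝ → ℝ := fun x => -∑' i : ℕ,
  Real.cos (2 * π * (b : ℝ) ^ i * x) * (b : ℝ) ^ (-(θ * ((i : ℝ) + 1)))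

lemma rpow_term_eq {b : ℕ} (hb : 0 < (b:ℝ)) (θ : ℝ) (i : ℕ) :
    (b : ℝ) ^ (-(θ * ((i : ℝ) + 1))) = ((b:ℝ) ^ (-θ)) ^ (i + 1) := by
  rw [← Real.rpow_natCast ((b:ℝ) ^ (-θ)) (i+1), ← Real.rpow_mul hb.le]
  congr 1
  push_cast
  ring

lemma rpow_pow_comm {β : ℝ} (hβ : 0 ≤ β) (s : ℝ) (N : ℕ) :
    (β ^ s) ^ N = (β ^ N : ℝ) ^ s := by
  rw [← Real.rpow_natCast (β ^ s) N, ← Real.rpow_mul hβ, mul_comm,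
    Real.rpow_mul hβ, Real.rpow_natCast]

lemma summable_aux {r : ℝ} (hr0 : 0 ≤ r) (hr1 : r < 1) (f : ℕ → ℝ)
    (hf : ∀ i, |f i| ≤ 1) : Summable (fun i => f i * r ^ (i+1)) := by
  have hg : Summable (fun i : ℕ => r ^ (i+1)) := by
    simpa [pow_succ, mul_comm] using (summable_geometric_of_lt_one hr0 hr1).mul_left r
  refine Summable.of_norm_bounded hg (fun i => ?_)
  rw [Real.norm_eq_abs, abs_mul, abs_of_nonneg (pow_nonneg hr0 _)]
  nlinarith [hf i, abs_nonneg (f i), pow_nonneg hr0 (i+1), abs_mul_abs_self (f i)]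

lemma W_sub {b : ℕ} {θ : ℝ} (hb : 0 < (b:ℝ)) (hr1 : (b:ℝ)^(-θ) < 1) (x y : ℝ) :
    Wf b θ x - Wf b θ y = ∑' i : ℕ,
      (Real.cos (2*π*(b:ℝ)^i*y) - Real.cos (2*π*(b:ℝ)^i*x)) * ((b:ℝ)^(-θ))^(i+1) := by
  have hr0 : (0:ℝ) ≤ (b:ℝ)^(-θ) := Real.rpow_nonneg hb.le _
  have hsx : Summable (fun i : ℕ => Real.cos (2*π*(b:ℝ)^i*x) * ((b:ℝ)^(-θ))^(i+1)) :=
    summable_aux hr0 hr1 _ (fun i => Real.abs_cos_le_one _)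
  have hsy : Summable (fun i : ℕ => Real.cos (2*π*(b:ℝ)^i*y) * ((b:ℝ)^(-θ))^(i+1)) :=
    summable_aux hr0 hr1 _ (fun i => Real.abs_cos_le_one _)
  have hfun : (fun i : ℕ => (Real.cos (2*π*(b:ℝ)^i*y) - Real.cos (2*π*(b:ℝ)^i*x))
      * ((b:ℝ)^(-θ))^(i+1))
      = fun i => Real.cos (2*π*(b:ℝ)^i*y) * ((b:ℝ)^(-θ))^(i+1)
        - Real.cos (2*π*(b:ℝ)^i*x) * ((b:ℝ)^(-θ))^(i+1) := by
    funext i; ring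
  rw [hfun, Summable.tsum_sub hsy hsx]
  unfold Wf
  simp only [rpow_term_eq hb θ]
  ring

lemma abs_cos_sub_cos_le (a c : ℝ) : |Real.cos a - Real.cos c| ≤ |a - c| := by
  rw [Real.cos_sub_cos]
  have h1 : |Real.sin ((a+c)/2)| ≤ 1 := Real.abs_sin_le_one _
  have h2 : |Real.sin ((a-c)/2)| ≤ |(a-c)/2| := Real.abs_sin_le_abs
  have h3 : |(a-c)/2| = |a-c|/2 := by rw [abs_div, abs_two]
  rw [abs_mul, abs_mul, abs_neg, abs_two]
  rw [h3] at h2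
  nlinarith [abs_nonneg (Real.sin ((a+c)/2)), abs_nonneg (Real.sin ((a-c)/2)),
    abs_nonneg (a-c)]

set_option maxHeartbeats 1000000 in
lemma W_upper {b : ℕ} {θ : ℝ} (hθ0 : 0 < θ) (hθ1 : θ < 1)
    (hβ5 : (5:ℝ) ≤ (b:ℝ)) (hc5 : (5:ℝ) ≤ (b:ℝ) ^ (1-θ)) :
    ∃ C > 0, ∀ x y : ℝ, |x - y| ≤ 1 →
      |Wf b θ x - Wf b θ y| ≤ C * |x - y| ^ θ := by
  set β : ℝ := (b:ℝ) with hβdef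
  have hβ0 : (0:ℝ) < β := by linarith
  have hβ1 : (1:ℝ) < β := by linarith
  set r : ℝ := β ^ (-θ) with hrdef
  have hr0 : 0 < r := Real.rpow_pos_of_pos hβ0 _
  have hr1 : r < 1 := Real.rpow_lt_one_of_one_lt_of_neg hβ1 (by linarith)
  set c : ℝ := β ^ (1-θ) with hcdef
  have hc1 : (1:ℝ) < c := by linarith
  have hcr : c = β * r := by
    rw [hcdef, hrdef, show (1-θ) = 1 + (-θ) by ring, Real.rpow_add hβ0, Real.rpow_one]
  have hC0 : 0 < 2*π*r*c/(c-1) + 2/(1-r) := by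
    have h1 : 0 < 2*π*r*c/(c-1) := by
      apply div_pos (by positivity) (by linarith)
    have h2 : 0 < 2/(1-r) := by
      apply div_pos (by norm_num) (by linarith)
    linarith
  refine ⟨2*π*r*c/(c-1) + 2/(1-r), hC0, ?_⟩
  intro x y hxy1
  rcases eq_or_ne x y with h | hne
  · simp [h, Real.zero_rpow hθ0.ne']
  set h : ℝ := |x - y| with hhdef
  have hh0 : 0 < h := abs_pos.mpr (sub_ne_zero.mpr hne)
  have hinv1 : 1 ≤ h⁻¹ := (one_le_inv₀ hh0).mpr hxy1
  have hlogb0 : 0 ≤ Real.logb β h⁻¹ := Real.logb_nonneg hβ1 hinv1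
  set N : ℕ := ⌈Real.logb β h⁻¹⌉₊ with hNdef
  have hP1 : h⁻¹ ≤ β ^ N := by
    have h1 : h⁻¹ = β ^ Real.logb β h⁻¹ := (Real.rpow_logb hβ0 hβ1.ne' (by positivity)).symm
    have h2 : β ^ Real.logb β h⁻¹ ≤ β ^ ((N:ℝ)) :=
      Real.rpow_le_rpow_of_exponent_le hβ1.le (Nat.le_ceil _)
    rw [Real.rpow_natCast] at h2
    rw [← h1] at h2
    exact h2
  have hP2 : (β:ℝ) ^ N ≤ β * h⁻¹ := by
    have h2 : β ^ ((N:ℝ)) ≤ β ^ (Real.logb β h⁻¹ + 1) :=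
      Real.rpow_le_rpow_of_exponent_le hβ1.le (Nat.ceil_lt_add_one hlogb0).le
    rw [Real.rpow_natCast, Real.rpow_add hβ0, Real.rpow_one,
      Real.rpow_logb hβ0 hβ1.ne' (by positivity), mul_comm] at h2
    exact h2
  have hβN0 : (0:ℝ) < β ^ N := by positivity
  have hrN : r ^ N ≤ h ^ θ := by
    have e1 : r ^ N = ((β ^ N : ℝ)) ^ (-θ) := _root_.rpow_pow_comm hβ0.le _ _
    have e2 : (h⁻¹) ^ θ ≤ ((β ^ N : ℝ)) ^ θ :=
      Real.rpow_le_rpow (by positivity) hP1 hθ0.le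
    rw [Real.inv_rpow hh0.le] at e2
    rw [e1, Real.rpow_neg hβN0.le]
    exact inv_le_of_inv_le₀ (by positivity) e2
  have hcN : c ^ N ≤ c * h ^ (θ-1) := by
    have e1 : c ^ N = ((β ^ N : ℝ)) ^ (1-θ) := _root_.rpow_pow_comm hβ0.le _ _
    have e2 : ((β ^ N : ℝ)) ^ (1-θ) ≤ (β * h⁻¹) ^ (1-θ) :=
      Real.rpow_le_rpow (by positivity) hP2 (by linarith)
    rw [Real.mul_rpow hβ0.le (by positivity), Real.inv_rpow hh0.le,
      ← Real.rpow_neg hh0.le, neg_sub] at e2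
    rw [e1]; exact e2
  -- summability of the dominating sequence
  have hgeo : Summable (fun i : ℕ => r ^ (i+1)) := by
    simpa [pow_succ, mul_comm] using (summable_geometric_of_lt_one hr0.le hr1).mul_left r
  have hG : Summable (fun i : ℕ => min 2 (2*π*β^i*h) * r ^ (i+1)) := by
    refine Summable.of_nonneg_of_le (fun i => ?_) (fun i => ?_) (hgeo.mul_left 2)
    · have h4 : (0:ℝ) ≤ min 2 (2*π*β^i*h) := le_min (by norm_num) (by positivity)
      have h5 : (0:ℝ) ≤ r ^ (i+1) := by positivity
      exact mul_nonneg h4 h5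
    · exact mul_le_mul_of_nonneg_right (min_le_left _ _) (by positivity)
  have hWd := W_sub (b := b) (θ := θ) hβ0 hr1 x y
  have hF : ∀ i : ℕ, |(Real.cos (2*π*β^i*y) - Real.cos (2*π*β^i*x)) * r^(i+1)|
      ≤ min 2 (2*π*β^i*h) * r ^ (i+1) := by
    intro i
    rw [abs_mul, abs_of_nonneg (by positivity : (0:ℝ) ≤ r^(i+1))]
    refine mul_le_mul_of_nonneg_right (le_min ?_ ?_) (by positivity)
    · calc |Real.cos (2*π*β^i*y) - Real.cos (2*π*β^i*x)|
          ≤ |Real.cos (2*π*β^i*y)| + |Real.cos (2*π*β^i*x)| := abs_sub _ _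
        _ ≤ 2 := by
            linarith [Real.abs_cos_le_one (2*π*β^i*y), Real.abs_cos_le_one (2*π*β^i*x)]
    · calc |Real.cos (2*π*β^i*y) - Real.cos (2*π*β^i*x)|
          ≤ |2*π*β^i*y - 2*π*β^i*x| := _root_.abs_cos_sub_cos_le _ _
        _ = 2*π*β^i * |y - x| := by
            rw [show 2*π*β^i*y - 2*π*β^i*x = 2*π*β^i * (y-x) by ring, abs_mul,
              abs_of_nonneg (by positivity : (0:ℝ) ≤ 2*π*β^i)]
        _ = 2*π*β^i*h := by rw [hhdef, abs_sub_comm]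
  have hFs : Summable (fun i : ℕ => |(Real.cos (2*π*β^i*y) - Real.cos (2*π*β^i*x)) * r^(i+1)|) :=
    Summable.of_nonneg_of_le (fun i => abs_nonneg _) hF hG
  have habs : |Wf b θ x - Wf b θ y| ≤ ∑' i : ℕ, min 2 (2*π*β^i*h) * r ^ (i+1) := by
    rw [hWd]
    have h10 : Summable fun i : ℕ =>
        ‖(Real.cos (2*π*β^i*y) - Real.cos (2*π*β^i*x)) * r^(i+1)‖ := by
      simpa only [Real.norm_eq_abs] using hFs
    have h11 := norm_tsum_le_tsum_norm h10
    simp only [Real.norm_eq_abs] at h11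
    exact h11.trans (Summable.tsum_le_tsum hF hFs hG)
  have hsplit := Summable.sum_add_tsum_nat_add (f := fun i : ℕ => min 2 (2*π*β^i*h) * r ^ (i+1)) N hG
  have hhh : h * h ^ (θ-1) = h ^ θ := by
    have h12 := Real.rpow_add hh0 1 (θ-1)
    rw [Real.rpow_one] at h12
    rw [show (1:ℝ)+(θ-1) = θ by ring] at h12
    exact h12.symm
  have hfin : ∑ i ∈ Finset.range N, min 2 (2*π*β^i*h) * r ^ (i+1)
      ≤ 2*π*r*c/(c-1) * h ^ θ := by
    have step1 : ∑ i ∈ Finset.range N, min 2 (2*π*β^i*h) * r ^ (i+1)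
        ≤ ∑ i ∈ Finset.range N, (2*π*h*r) * c ^ i := by
      refine Finset.sum_le_sum (fun i _ => ?_)
      have h6 : min 2 (2*π*β^i*h) * r ^ (i+1) ≤ (2*π*β^i*h) * r ^ (i+1) :=
        mul_le_mul_of_nonneg_right (min_le_right _ _) (by positivity)
      refine h6.trans (le_of_eq ?_)
      rw [hcr, mul_pow, pow_succ]
      ring
    rw [← Finset.mul_sum] at step1
    have hgeom : ∑ i ∈ Finset.range N, c ^ i ≤ c ^ N / (c-1) := by
      rw [geom_sum_eq hc1.ne']
      exact (div_le_div_iff_of_pos_right (by linarith : (0:ℝ) < c - 1)).mpr (by linarith)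
    calc ∑ i ∈ Finset.range N, min 2 (2*π*β^i*h) * r ^ (i+1)
        ≤ 2*π*h*r * (c ^ N / (c-1)) := by
          refine step1.trans ?_
          exact mul_le_mul_of_nonneg_left hgeom (by positivity)
      _ ≤ 2*π*h*r * ((c * h^(θ-1)) / (c-1)) := by
          refine mul_le_mul_of_nonneg_left ?_ (by positivity)
          exact (div_le_div_iff_of_pos_right (by linarith : (0:ℝ) < c - 1)).mpr hcN
      _ = 2*π*r*c/(c-1) * (h * h^(θ-1)) := by ring
      _ = 2*π*r*c/(c-1) * h ^ θ := by rw [hhh]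
  have htail : ∑' i : ℕ, min 2 (2*π*β^(i+N)*h) * r ^ (i+N+1) ≤ 2/(1-r) * h^θ := by
    have hs1 : Summable (fun i : ℕ => min 2 (2*π*β^(i+N)*h) * r ^ (i+N+1)) :=
      (summable_nat_add_iff N).mpr hG
    have hs2 : Summable (fun i : ℕ => 2 * r^(N+1) * r ^ i) :=
      (summable_geometric_of_lt_one hr0.le hr1).mul_left _
    have hle : ∀ i : ℕ, min 2 (2*π*β^(i+N)*h) * r ^ (i+N+1) ≤ 2 * r^(N+1) * r^i := by
      intro i
      have h7 : min 2 (2*π*β^(i+N)*h) * r ^ (i+N+1) ≤ 2 * r ^ (i+N+1) :=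
        mul_le_mul_of_nonneg_right (min_le_left _ _) (by positivity)
      refine h7.trans (le_of_eq ?_)
      rw [show i+N+1 = (N+1)+i by omega, pow_add]
      ring
    have h8 : r^(N+1) ≤ h ^ θ := by
      have : r^(N+1) ≤ r^N := by
        rw [pow_succ]
        nlinarith [pow_nonneg hr0.le N]
      linarith
    calc ∑' i : ℕ, min 2 (2*π*β^(i+N)*h) * r ^ (i+N+1)
        ≤ ∑' i : ℕ, 2 * r^(N+1) * r^i := Summable.tsum_le_tsum hle hs1 hs2
      _ = 2 * r^(N+1) * (1-r)⁻¹ := by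
          rw [tsum_mul_left, tsum_geometric_of_lt_one hr0.le hr1]
      _ ≤ 2 * h^θ * (1-r)⁻¹ := by
          have h9 : (0:ℝ) < 1 - r := by linarith
          have : (0:ℝ) ≤ (1-r)⁻¹ := by positivity
          nlinarith
      _ = 2/(1-r) * h^θ := by ring
  calc |Wf b θ x - Wf b θ y| ≤ ∑' i : ℕ, min 2 (2*π*β^i*h) * r ^ (i+1) := habs
    _ = (∑ i ∈ Finset.range N, min 2 (2*π*β^i*h) * r ^ (i+1))
        + ∑' i : ℕ, min 2 (2*π*β^(i+N)*h) * r ^ (i+N+1) := hsplit.symm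
    _ ≤ 2*π*r*c/(c-1) * h ^ θ + 2/(1-r) * h^θ := add_le_add hfin htail
    _ = (2*π*r*c/(c-1) + 2/(1-r)) * h ^ θ := by ring

set_option maxHeartbeats 1000000 in
lemma W_lower {b : ℕ} {θ : ℝ} (hθ0 : 0 < θ) (hθ1 : θ < 1)
    (hβ5 : (5:ℝ) ≤ (b:ℝ)) (hc5 : (5:ℝ) ≤ (b:ℝ) ^ (1-θ)) (x : ℝ) (m : ℕ)
    (hx : Int.fract ((b:ℝ)^m * x) ∈ Icc (1/12 : ℝ) (1/4)) :
    (1/(3*(b:ℝ))) * ((((b:ℝ)^(m+1))⁻¹) ^ θ)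
      ≤ |Wf b θ x - Wf b θ (x + ((b:ℝ)^(m+1))⁻¹)| := by
  set β : ℝ := (b:ℝ) with hβdef
  have hβ0 : (0:ℝ) < β := by linarith
  have hβ1 : (1:ℝ) < β := by linarith
  set r : ℝ := β ^ (-θ) with hrdef
  have hr0 : 0 < r := Real.rpow_pos_of_pos hβ0 _
  have hr1 : r < 1 := Real.rpow_lt_one_of_one_lt_of_neg hβ1 (by linarith)
  set c : ℝ := β ^ (1-θ) with hcdef
  have hc1 : (1:ℝ) < c := by linarith
  have hcr : c = β * r := by
    rw [hcdef, hrdef, show (1-θ) = 1 + (-θ) by ring, Real.rpow_add hβ0, Real.rpow_one]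
  set y : ℝ := x + (β^(m+1))⁻¹ with hydef
  -- rpow identity
  have hrth : (((β^(m+1)):ℝ)⁻¹) ^ θ = r ^ (m+1) := by
    rw [Real.inv_rpow (by positivity), _root_.rpow_pow_comm hβ0.le (-θ) (m+1),
      Real.rpow_neg (by positivity)]
  have hWd := W_sub (b := b) (θ := θ) hβ0 hr1 x y
  set F : ℕ → ℝ := fun i => (Real.cos (2*π*β^i*y) - Real.cos (2*π*β^i*x)) * r^(i+1) with hFdef
  have hvanish : ∀ i ∉ Finset.range (m+1), F i = 0 := by
    intro i hi
    rw [Finset.mem_range, not_lt] at hi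
    set k : ℕ := i - (m+1) with hkdef
    have hik : i = (m+1) + k := by omega
    have hβi : β^i * (β^(m+1))⁻¹ = β^k := by
      rw [hik, pow_add]
      field_simp
    have harg : 2*π*β^i*y = 2*π*β^i*x + ((b^k : ℕ) : ℝ) * (2*π) := by
      rw [hydef]
      push_cast
      rw [← hβi]
      ring
    rw [hFdef]
    simp only
    rw [harg, Real.cos_add_nat_mul_two_pi, sub_self, zero_mul]
  have htsum : Wf b θ x - Wf b θ y = ∑ i ∈ Finset.range (m+1), F i := by
    rw [hWd]
    exact tsum_eq_sum hvanish
  have hsplit : ∑ i ∈ Finset.range (m+1), F i = (∑ i ∈ Finset.range m, F i) + F m :=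
    Finset.sum_range_succ F m
  -- the main term
  have hβm : β^m * (β^(m+1))⁻¹ = β⁻¹ := by
    rw [pow_succ]
    field_simp
  have hsinb : 2/β ≤ Real.sin (π/β) := by
    have hb2 : π/β ≤ π/2 := by
      rw [div_le_div_iff₀ hβ0 (by norm_num)]
      nlinarith [Real.pi_pos]
    have h0b : 0 < π/β := by positivity
    have := Real.mul_abs_le_abs_sin (x := π/β) (by rw [abs_of_pos h0b]; exact hb2)
    rw [abs_of_pos h0b, abs_of_nonneg (Real.sin_nonneg_of_nonneg_of_le_pi h0b.le
      (by nlinarith [Real.pi_pos]))] at this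
    calc 2/β = 2/π * (π/β) := by field_simp
      _ ≤ Real.sin (π/β) := this
  have hsinu : 1/2 ≤ |Real.sin (2*π*β^m*x + π/β)| := by
    set f : ℝ := Int.fract (β^m * x) with hfdef
    have hfloor : ((⌊β^m * x⌋ : ℤ) : ℝ) + f = β^m * x := Int.floor_add_fract _
    have harg : 2*π*β^m*x + π/β = (2*π*f + π/β) + (⌊β^m * x⌋ : ℝ) * (2*π) := by
      linear_combination (2*π) * hfloor.symm
    rw [harg, Real.sin_add_int_mul_two_pi]
    set t : ℝ := 2*π*f + π/β with htdef
    have hf1 : 1/12 ≤ f := hx.1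
    have hf2 : f ≤ 1/4 := hx.2
    have hπβ1 : 0 < π/β := by positivity
    have hπβ2 : π/β ≤ π/5 := by
      exact div_le_div_of_nonneg_left Real.pi_pos.le (by norm_num) hβ5
    have ht1 : π/6 ≤ t := by rw [htdef]; nlinarith [Real.pi_pos]
    have ht2 : t ≤ 7*π/10 := by rw [htdef]; nlinarith [Real.pi_pos]
    have hsin : Real.sin t = Real.cos (π/2 - t) := (Real.cos_pi_div_two_sub t).symm
    have habs : |π/2 - t| ≤ π/3 := by
      rw [abs_le]
      constructor <;> nlinarith [Real.pi_pos]
    have hcos : (1:ℝ)/2 ≤ Real.cos (π/2 - t) := by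
      rw [← Real.cos_abs (π/2 - t)]
      calc (1:ℝ)/2 = Real.cos (π/3) := by rw [Real.cos_pi_div_three]
        _ ≤ Real.cos |π/2 - t| := Real.cos_le_cos_of_nonneg_of_le_pi (abs_nonneg _)
            (by nlinarith [Real.pi_pos]) habs
    calc (1:ℝ)/2 ≤ Real.sin t := by rw [hsin]; exact hcos
      _ ≤ |Real.sin t| := le_abs_self _
  have hmain : 2/β * r^(m+1) ≤ |F m| := by
    have harg : 2*π*β^m*y = 2*π*β^m*x + 2*π/β := by
      rw [hydef]
      rw [show 2*π*β^m*(x + (β^(m+1))⁻¹) = 2*π*β^m*x + 2*π*(β^m * (β^(m+1))⁻¹) by ring, hβm]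
      ring
    have hcc : Real.cos (2*π*β^m*y) - Real.cos (2*π*β^m*x)
        = -2 * Real.sin (2*π*β^m*x + π/β) * Real.sin (π/β) := by
      rw [harg, Real.cos_sub_cos]
      congr 2 <;> ring
    have hπβπ : π/β ≤ π := by
      have h3 := div_le_div_of_nonneg_left Real.pi_pos.le one_pos (by linarith : (1:ℝ) ≤ β)
      simpa using h3
    have hs_nonneg : 0 ≤ Real.sin (π/β) :=
      Real.sin_nonneg_of_nonneg_of_le_pi (by positivity) hπβπ
    have hFm : |F m| = 2 * |Real.sin (2*π*β^m*x + π/β)| * Real.sin (π/β) * r^(m+1) := by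
      rw [hFdef]
      simp only
      rw [hcc, abs_mul, abs_mul, abs_mul, abs_of_nonneg hs_nonneg,
        abs_of_nonneg (by positivity : (0:ℝ) ≤ r^(m+1))]
      norm_num
    rw [hFm]
    have h1 : (0:ℝ) ≤ r^(m+1) := by positivity
    calc 2/β * r^(m+1) ≤ Real.sin (π/β) * r^(m+1) :=
          mul_le_mul_of_nonneg_right hsinb h1
      _ = 2*(1/2) * Real.sin (π/β) * r^(m+1) := by ring
      _ ≤ 2*|Real.sin (2*π*β^m*x + π/β)| * Real.sin (π/β) * r^(m+1) := by
          refine mul_le_mul_of_nonneg_right (mul_le_mul_of_nonneg_right ?_ hs_nonneg) h1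
          linarith [hsinu]
  -- the remainder
  have hrem : |∑ i ∈ Finset.range m, F i| ≤ (π/2)/β * r^(m+1) := by
    have hterm : ∀ i ∈ Finset.range m, |F i| ≤ (2*π*(β^(m+1))⁻¹*r) * c^i := by
      intro i _
      rw [hFdef]
      simp only
      rw [abs_mul, abs_of_nonneg (by positivity : (0:ℝ) ≤ r^(i+1))]
      have h1 : |Real.cos (2*π*β^i*y) - Real.cos (2*π*β^i*x)| ≤ 2*π*β^i*(β^(m+1))⁻¹ := by
        calc |Real.cos (2*π*β^i*y) - Real.cos (2*π*β^i*x)|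
            ≤ |2*π*β^i*y - 2*π*β^i*x| := _root_.abs_cos_sub_cos_le _ _
          _ = 2*π*β^i*(β^(m+1))⁻¹ := by
              rw [hydef, show 2*π*β^i*(x + (β^(m+1))⁻¹) - 2*π*β^i*x
                = 2*π*β^i*(β^(m+1))⁻¹ by ring]
              exact abs_of_nonneg (by positivity)
      calc |Real.cos (2*π*β^i*y) - Real.cos (2*π*β^i*x)| * r^(i+1)
          ≤ (2*π*β^i*(β^(m+1))⁻¹) * r^(i+1) :=
            mul_le_mul_of_nonneg_right h1 (by positivity)
        _ = (2*π*(β^(m+1))⁻¹*r) * c^i := by rw [hcr, mul_pow, pow_succ]; ring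
    have hsum1 : |∑ i ∈ Finset.range m, F i| ≤ ∑ i ∈ Finset.range m, |F i| :=
      Finset.abs_sum_le_sum_abs _ _
    have hsum2 : ∑ i ∈ Finset.range m, |F i|
        ≤ (2*π*(β^(m+1))⁻¹*r) * ∑ i ∈ Finset.range m, c^i := by
      rw [Finset.mul_sum]
      exact Finset.sum_le_sum hterm
    have hgeom : ∑ i ∈ Finset.range m, c ^ i ≤ c ^ m / (c-1) := by
      rw [geom_sum_eq hc1.ne']
      exact (div_le_div_iff_of_pos_right (by linarith : (0:ℝ) < c - 1)).mpr (by linarith)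
    have hcm : c^m = β^m * r^m := by rw [hcr, mul_pow]
    have hc1' : (0:ℝ) < c - 1 := by linarith
    have h2 : (0:ℝ) < β*(c-1) := by positivity
    have hkey : (2*π*(β^(m+1))⁻¹*r) * (c^m/(c-1)) ≤ (π/2)/β * r^(m+1) := by
      have e : (2*π*(β^(m+1))⁻¹*r) * (c^m/(c-1)) = (2*π/(β*(c-1))) * r^(m+1) := by
        rw [hcm, pow_succ β m, pow_succ r m]
        field_simp
      rw [e]
      have hfrac : 2*π/(β*(c-1)) ≤ (π/2)/β := by
        rw [div_le_div_iff₀ h2 hβ0]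
        nlinarith [mul_nonneg (mul_nonneg Real.pi_pos.le hβ0.le)
          (by linarith : (0:ℝ) ≤ c - 5)]
      exact mul_le_mul_of_nonneg_right hfrac (by positivity)
    calc |∑ i ∈ Finset.range m, F i| ≤ ∑ i ∈ Finset.range m, |F i| := hsum1
      _ ≤ (2*π*(β^(m+1))⁻¹*r) * ∑ i ∈ Finset.range m, c^i := hsum2
      _ ≤ (2*π*(β^(m+1))⁻¹*r) * (c^m/(c-1)) :=
          mul_le_mul_of_nonneg_left hgeom (by positivity)
      _ ≤ (π/2)/β * r^(m+1) := hkey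
  -- conclusion
  rw [hrth, htsum, hsplit]
  have habs2 : |F m| - |∑ i ∈ Finset.range m, F i|
      ≤ |∑ i ∈ Finset.range m, F i + F m| := by
    have h := abs_sub_abs_le_abs_sub (F m) (-(∑ i ∈ Finset.range m, F i))
    rw [abs_neg, sub_neg_eq_add, add_comm] at h
    linarith
  have hcoef : 1/(3*β) ≤ (2 - π/2)/β := by
    rw [div_le_div_iff₀ (by positivity) hβ0]
    nlinarith [mul_nonneg hβ0.le (show (0:ℝ) ≤ 5 - 3*π/2 by nlinarith [Real.pi_lt_d2])]
  calc 1/(3*β) * r^(m+1) ≤ (2 - π/2)/β * r^(m+1) :=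
        mul_le_mul_of_nonneg_right hcoef (by positivity)
    _ = 2/β * r^(m+1) - (π/2)/β * r^(m+1) := by ring
    _ ≤ |F m| - |∑ i ∈ Finset.range m, F i| := by linarith [hmain, hrem]
    _ ≤ |∑ i ∈ Finset.range m, F i + F m| := habs2

lemma coe_fract_eq (t : ℝ) : ((Int.fract t : ℝ) : AddCircle (1:ℝ)) = (t : AddCircle (1:ℝ)) := by
  rw [QuotientAddGroup.eq_iff_sub_mem]
  rw [AddSubgroup.mem_zmultiples_iff]
  refine ⟨-⌊t⌋, ?_⟩
  rw [zsmul_eq_mul, mul_one]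
  simp only [Int.fract]
  push_cast
  ring

set_option maxHeartbeats 1000000 in
lemma ae_freq (b : ℕ) (hb : 1 < b) :
    ∀ᵐ x : ℝ, ∀ N : ℕ, ∃ m : ℕ, N ≤ m ∧
      Int.fract ((b:ℝ)^m * x) ∈ Icc (1/12:ℝ) (1/4) := by
  haveI : Fact ((0:ℝ) < 1) := ⟨one_pos⟩
  set A : Set (AddCircle (1:ℝ)) := ((↑) : ℝ → AddCircle (1:ℝ)) '' (Icc (1/12) (1/4)) with hAdef
  have hA_meas : MeasurableSet A :=
    (isCompact_Icc.image (AddCircle.continuous_mk' 1)).isClosed.measurableSet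
  set T : AddCircle (1:ℝ) → AddCircle (1:ℝ) := fun z => b • z with hTdef
  have hT : Ergodic T := AddCircle.ergodic_nsmul hb
  have hiter : ∀ (n : ℕ) (z : AddCircle (1:ℝ)), T^[n] z = b^n • z := by
    intro n
    induction n with
    | zero => intro z; simp
    | succ n ih =>
        intro z
        rw [Function.iterate_succ_apply, ih (T z)]
        show b^n • (b • z) = b^(n+1) • z
        rw [smul_smul, ← pow_succ]
  set B : Set (AddCircle (1:ℝ)) := ⋂ N : ℕ, ⋃ n : ℕ, ⋃ (_ : N ≤ n), T^[n] ⁻¹' A with hBdef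
  have hCmeas : ∀ N : ℕ, MeasurableSet (⋃ n : ℕ, ⋃ (_ : N ≤ n), T^[n] ⁻¹' A) := by
    intro N
    exact MeasurableSet.iUnion fun n => MeasurableSet.iUnion fun _ =>
      (hT.toMeasurePreserving.iterate n).measurable hA_meas
  have hB_meas : MeasurableSet B := MeasurableSet.iInter hCmeas
  have hB_inv : T ⁻¹' B = B := by
    ext z
    simp only [hBdef, mem_preimage, mem_iInter, mem_iUnion]
    constructor
    · intro h N
      obtain ⟨n, hn, hz⟩ := h N
      rw [← Function.iterate_succ_apply] at hz
      exact ⟨n+1, by omega, hz⟩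
    · intro h N
      obtain ⟨n, hn, hz⟩ := h (N+1)
      refine ⟨n-1, by omega, ?_⟩
      have he : n = (n-1) + 1 := by omega
      rw [he, Function.iterate_succ_apply] at hz
      exact hz
  -- A has positive measure
  have hA_pos : 0 < volume A := by
    have h1 := AddCircle.add_projection_respects_measure (T := (1:ℝ)) 0 hA_meas
    have hsub : Icc (1/12:ℝ) (1/4) ⊆ (QuotientAddGroup.mk ⁻¹' A ∩ Ioc 0 (0+1)) := by
      intro s hs
      refine ⟨mem_image_of_mem _ hs, ?_⟩
      simp only [zero_add, mem_Ioc]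
      constructor
      · linarith [hs.1]
      · linarith [hs.2]
    calc (0:ℝ≥0∞) < volume (Icc (1/12:ℝ) (1/4)) := by
          rw [Real.volume_Icc]
          exact ENNReal.ofReal_pos.mpr (by norm_num)
      _ ≤ volume (QuotientAddGroup.mk ⁻¹' A ∩ Ioc 0 (0+1)) := measure_mono hsub
      _ = volume A := h1.symm
  -- B has positive measure via continuity from above
  have hge : ∀ N : ℕ, volume A ≤ volume (⋃ n : ℕ, ⋃ (_ : N ≤ n), T^[n] ⁻¹' A) := by
    intro N
    have h1 : volume (T^[N] ⁻¹' A) = volume A :=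
      (hT.toMeasurePreserving.iterate N).measure_preimage hA_meas.nullMeasurableSet
    rw [← h1]
    exact measure_mono (subset_iUnion₂ (s := fun n _ => T^[n] ⁻¹' A) N le_rfl)
  have hanti : Antitone (fun N : ℕ => ⋃ n : ℕ, ⋃ (_ : N ≤ n), T^[n] ⁻¹' A) := by
    intro N M h
    exact iUnion₂_subset fun n hn => subset_iUnion₂ (s := fun n _ => T^[n] ⁻¹' A) n (h.trans hn)
  have hlim : Filter.Tendsto (fun N : ℕ => volume (⋃ n : ℕ, ⋃ (_ : N ≤ n), T^[n] ⁻¹' A))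
      atTop (nhds (volume B)) := by
    refine tendsto_measure_iInter_atTop (fun N => (hCmeas N).nullMeasurableSet) hanti
      ⟨0, ?_⟩
    exact (measure_lt_top _ _).ne
  have hB_pos : 0 < volume B := by
    have h2 : volume A ≤ volume B := ge_of_tendsto' hlim hge
    exact lt_of_lt_of_le hA_pos h2
  -- ergodicity: B is co-null
  have hBuniv : B =ᵐ[volume] (univ : Set (AddCircle (1:ℝ))) := by
    rcases hT.ae_empty_or_univ hB_meas hB_inv with h | h
    · exfalso
      rw [ae_eq_empty] at h
      exact hB_pos.ne' h
    · exact h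
  have hBc_null : volume Bᶜ = 0 := by
    rw [ae_eq_univ] at hBuniv
    exact hBuniv
  -- transfer to ℝ
  set pre : Set ℝ := ((↑) : ℝ → AddCircle (1:ℝ)) ⁻¹' Bᶜ with hpredef
  have hpre_meas : MeasurableSet pre :=
    (AddCircle.continuous_mk' 1).measurable hB_meas.compl
  have hpre_null : volume pre = 0 := by
    have hcov : pre ⊆ ⋃ k : ℤ, pre ∩ Ioc (k:ℝ) ((k:ℝ)+1) := by
      intro x hx
      have : x ∈ ⋃ k : ℤ, Ioc (k:ℝ) ((k:ℝ)+1) := by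
        rw [iUnion_Ioc_intCast ℝ]; trivial
      obtain ⟨S, ⟨k, rfl⟩, hxS⟩ := this
      exact mem_iUnion.mpr ⟨k, hx, hxS⟩
    refine measure_mono_null hcov (measure_iUnion_null fun k => ?_)
    have h1 := (AddCircle.measurePreserving_mk 1 (k:ℝ)).measure_preimage
      hB_meas.compl.nullMeasurableSet
    rw [Measure.restrict_apply' measurableSet_Ioc] at h1
    rw [hBc_null] at h1
    exact h1
  rw [MeasureTheory.ae_iff]
  refine measure_mono_null ?_ hpre_null
  intro x hx
  simp only [mem_setOf_eq] at hx
  push_neg at hx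
  obtain ⟨N, hN⟩ := hx
  -- show x ∈ pre, i.e. ¬ (↑x ∈ B)
  by_contra hxB
  rw [hpredef, mem_preimage, mem_compl_iff, not_not] at hxB
  rw [hBdef, mem_iInter] at hxB
  have h2 := hxB N
  rw [mem_iUnion] at h2
  obtain ⟨n, h3⟩ := h2
  rw [mem_iUnion] at h3
  obtain ⟨hn, h4⟩ := h3
  rw [mem_preimage, hiter] at h4
  -- b^n • ↑x = ↑((b:ℝ)^n * x)
  have hcoe : (b^n : ℕ) • ((x : ℝ) : AddCircle (1:ℝ)) = (((b:ℝ)^n * x : ℝ) : AddCircle (1:ℝ)) := by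
    rw [← AddCircle.coe_nsmul]
    congr 1
    push_cast
    ring
  rw [hcoe] at h4
  obtain ⟨s, hs, hseq⟩ := h4
  -- fract ((b:ℝ)^n * x) = s
  have hfr : Int.fract ((b:ℝ)^n * x) = s := by
    have h5 : ((Int.fract ((b:ℝ)^n * x) : ℝ) : AddCircle (1:ℝ)) = (s : AddCircle (1:ℝ)) := by
      rw [coe_fract_eq, hseq]
    have h6 : Int.fract ((b:ℝ)^n * x) ∈ Ico (0:ℝ) (0 + 1) := by
      simp only [zero_add]
      exact ⟨Int.fract_nonneg _, Int.fract_lt_one _⟩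
    have h7 : s ∈ Ico (0:ℝ) (0 + 1) := by
      simp only [zero_add]
      constructor
      · linarith [hs.1]
      · linarith [hs.2]
    exact (AddCircle.coe_eq_coe_iff_of_mem_Ico h6 h7).mp h5
  exact (hN n hn) (hfr ▸ hs)

lemma inv_pow_rpow {β : ℝ} (hβ : 0 < β) (s : ℝ) (m : ℕ) :
    ((β^m)⁻¹) ^ s = (β^(-s)) ^ m := by
  rw [Real.inv_rpow (by positivity), _root_.rpow_pow_comm hβ.le (-s) m,
    Real.rpow_neg (by positivity)]


/-- for `b ≥ 5^{1/(1-θ)}` an integer, `0 < θ < 1`, the (renormalized)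
Weierstrass function `α x = -∑' i, cos(2π bⁱ x) b^{-θ(i+1)}` has, at Lebesgue-almost
every `x`, local Hölder exponent exactly `θ`: it is θ-Hölder at `x`, but not
`(θ+γ)`-Hölder at `x` for any `γ > 0`. -/
theorem stmt19 (b : ℕ) (θ : ℝ) (hθ0 : 0 < θ) (hθ1 : θ < 1)
    (hb : (5 : ℝ) ^ (1 / (1 - θ)) ≤ (b : ℝ))
    (α : ℝ → ℝ)
    (hα : α = fun x => -∑' i : ℕ,
      Real.cos (2 * π * (b : ℝ) ^ i * x) * (b : ℝ) ^ (-(θ * ((i : ℝ) + 1)))) :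
    ∀ᵐ x ∂(volume : Measure ℝ),
      (∃ C > 0, ∃ ε > 0, ∀ y : ℝ, |y - x| < ε →
        |α x - α y| ≤ C * |x - y| ^ θ) ∧
      (∀ γ : ℝ, 0 < γ →
        ¬∃ C ε : ℝ, 0 < ε ∧ ∀ y : ℝ, |y - x| < ε →
          |α x - α y| ≤ C * |x - y| ^ (θ + γ)) := by
  have hθ1' : (0:ℝ) < 1 - θ := by linarith
  have hβ5 : (5:ℝ) ≤ (b:ℝ) := by
    have h1le : (1:ℝ) ≤ 1/(1-θ) := by
      rw [le_div_iff₀ hθ1']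
      linarith
    have h2 : (5:ℝ) ^ (1:ℝ) ≤ (5:ℝ) ^ (1/(1-θ)) :=
      Real.rpow_le_rpow_of_exponent_le (by norm_num) h1le
    rw [Real.rpow_one] at h2
    linarith
  have hβ0 : (0:ℝ) < (b:ℝ) := by linarith
  have hβgt1 : (1:ℝ) < (b:ℝ) := by linarith
  have hc5 : (5:ℝ) ≤ (b:ℝ) ^ (1-θ) := by
    have h0 : ((5:ℝ) ^ (1/(1-θ))) ^ (1-θ) = 5 := by
      rw [← Real.rpow_mul (by norm_num), one_div, inv_mul_cancel₀ hθ1'.ne', Real.rpow_one]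
    calc (5:ℝ) = ((5:ℝ) ^ (1/(1-θ))) ^ (1-θ) := h0.symm
      _ ≤ (b:ℝ) ^ (1-θ) := Real.rpow_le_rpow (by positivity) hb hθ1'.le
  have hα' : α = Wf b θ := hα
  have hbb : 1 < b := by exact_mod_cast hβgt1
  obtain ⟨C, hC0, hC⟩ := W_upper hθ0 hθ1 hβ5 hc5
  filter_upwards [ae_freq b hbb] with x hx
  constructor
  · refine ⟨C, hC0, 1, one_pos, fun y hy => ?_⟩
    rw [hα']
    refine hC x y ?_
    rw [abs_sub_comm]
    exact hy.le
  · intro γ hγ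
    rintro ⟨C', ε, hε, hH⟩
    set β : ℝ := (b:ℝ) with hβdef
    set ρ : ℝ := β ^ (-γ) with hρdef
    have hρ0 : 0 ≤ ρ := (Real.rpow_pos_of_pos hβ0 _).le
    have hρ1 : ρ < 1 := Real.rpow_lt_one_of_one_lt_of_neg hβgt1 (by linarith)
    -- eventually conditions
    have hT1 : Filter.Tendsto (fun m : ℕ => (β^(m+1))⁻¹) atTop (nhds 0) := by
      have h1 : Filter.Tendsto (fun m : ℕ => β^(m+1)) atTop atTop :=
        (tendsto_pow_atTop_atTop_of_one_lt hβgt1).comp (tendsto_add_atTop_nat 1)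
      exact h1.inv_tendsto_atTop
    have hT2 : Filter.Tendsto (fun m : ℕ => C' * ρ^(m+1)) atTop (nhds 0) := by
      have h1 : Filter.Tendsto (fun m : ℕ => ρ^(m+1)) atTop (nhds 0) :=
        (tendsto_pow_atTop_nhds_zero_of_lt_one hρ0 hρ1).comp (tendsto_add_atTop_nat 1)
      simpa using h1.const_mul C'
    have hev1 : ∀ᶠ m : ℕ in atTop, (β^(m+1))⁻¹ < ε := hT1.eventually_lt_const hε
    have hev2 : ∀ᶠ m : ℕ in atTop, C' * ρ^(m+1) < 1/(3*β) :=
      hT2.eventually_lt_const (by positivity)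
    obtain ⟨N₀, hN₀⟩ := (hev1.and hev2).exists_forall_of_atTop
    obtain ⟨m, hmN, hmfr⟩ := hx N₀
    obtain ⟨hsm, hργ⟩ := hN₀ m hmN
    set h : ℝ := (β^(m+1))⁻¹ with hhdef
    have hh0 : 0 < h := by positivity
    set y : ℝ := x + h with hydef
    have hyx : |y - x| = h := by
      rw [hydef]
      simp [abs_of_pos hh0]
    have hxy : |x - y| = h := by rw [abs_sub_comm]; exact hyx
    have hHy := hH y (by rw [hyx]; exact hsm)
    have hlow := W_lower hθ0 hθ1 hβ5 hc5 x m hmfr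
    rw [← hα'] at hlow
    have hγid : h ^ γ = ρ^(m+1) := by
      rw [hhdef, hρdef]
      exact inv_pow_rpow hβ0 γ (m+1)
    have hsplitpow : h ^ (θ + γ) = h ^ θ * h ^ γ := Real.rpow_add hh0 θ γ
    have hθpos : 0 < h ^ θ := Real.rpow_pos_of_pos hh0 θ
    rw [hxy, hsplitpow, hγid] at hHy
    -- hHy : |α x - α y| ≤ C' * (h^θ * ρ^(m+1))
    -- hlow : 1/(3*β) * (h ^ θ) ≤ |α x - α y|
    have hfinal : 1/(3*β) * h ^ θ < 1/(3*β) * h ^ θ := by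
      calc 1/(3*β) * h ^ θ ≤ |α x - α y| := hlow
        _ ≤ C' * (h ^ θ * ρ^(m+1)) := hHy
        _ = (C' * ρ^(m+1)) * h ^ θ := by ring
        _ < 1/(3*β) * h ^ θ := mul_lt_mul_of_pos_right hργ hθpos
    exact absurd hfinal (lt_irrefl _)
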